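/- Let (Ω, 𝓕) be a measurable space and let c : 𝓕 → [0,1] be a monotone, normalized, submodular set function. Then the Choquet integral with respect to c is subadditive: for all bounded Borel-measurable X, Y : Ω → ℝ, ∫(X + Y) dc ≤ ∫X dc + ∫Y dc. -/

import Mathlib

open MeasureTheory Set

/-- The Choquet integral of `X` with respect to the set function `c`:
`∫ X dc = ∫_{-∞}^0 (c(X > x) - 1) dx + ∫_0^∞ c(X > x) dx`. -/
noncomputable def choquet {Ω : Type*} [MeasurableSpace Ω] (c : Set Ω → ℝ) (X : Ω → ℝ) : ℝ :=
  (∫ x in Set.Iio (0 : ℝ), (c {ω | x < X ω} - 1)) + ∫ x in Set.Ioi (0 : ℝ), c {ω | x < X ω}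

namespace ChoquetAux
set_option linter.unusedSectionVars false
set_option linter.unusedSectionVars false

variable {Ω : Type*} [MeasurableSpace Ω]

structure Cap (c : Set Ω → ℝ) : Prop where
  mono : ∀ ⦃A B : Set Ω⦄, MeasurableSet A → MeasurableSet B → A ⊆ B → c A ≤ c B
  range : ∀ A : Set Ω, MeasurableSet A → c A ∈ Set.Icc (0:ℝ) 1
  empty : c ∅ = 0
  cuniv : c Set.univ = 1
  submod : ∀ A B : Set Ω, MeasurableSet A → MeasurableSet B → c (A ∪ B) + c (A ∩ B) ≤ c A + c B

/-- generalized survival function: `t ↦ c ({Z > t} ∩ B)`. -/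
noncomputable def gg (c : Set Ω → ℝ) (Z : Ω → ℝ) (B : Set Ω) (t : ℝ) : ℝ :=
  c ({ω | t < Z ω} ∩ B)

lemma meas_gt (Z : Ω → ℝ) (hZ : Measurable Z) (t : ℝ) : MeasurableSet {ω | t < Z ω} :=
  measurableSet_lt measurable_const hZ

variable {c : Set Ω → ℝ} {Z : Ω → ℝ} {B : Set Ω}

lemma gg_antitone (hc : Cap c) (hZ : Measurable Z) (hB : MeasurableSet B) :
    Antitone (gg c Z B) := by
  intro s t hst
  exact hc.mono ((meas_gt Z hZ t).inter hB) ((meas_gt Z hZ s).inter hB)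
    (inter_subset_inter_left _ (fun ω h => lt_of_le_of_lt hst h))

lemma gg_nonneg (hc : Cap c) (hZ : Measurable Z) (hB : MeasurableSet B) (t : ℝ) :
    0 ≤ gg c Z B t := (hc.range _ ((meas_gt Z hZ t).inter hB)).1

lemma gg_le_one (hc : Cap c) (hZ : Measurable Z) (hB : MeasurableSet B) (t : ℝ) :
    gg c Z B t ≤ 1 := (hc.range _ ((meas_gt Z hZ t).inter hB)).2

lemma gg_intervalIntegrable (hc : Cap c) (hZ : Measurable Z) (hB : MeasurableSet B) (a b : ℝ) :
    IntervalIntegrable (gg c Z B) volume a b :=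
  (gg_antitone hc hZ hB).intervalIntegrable

lemma gg_eq_cB {M : ℝ} (hM : ∀ ω, |Z ω| ≤ M) {t : ℝ} (ht : t < -M) :
    gg c Z B t = c B := by
  unfold gg
  congr 1
  have : {ω | t < Z ω} = univ := eq_univ_of_forall fun ω => lt_of_lt_of_le ht (neg_le_of_abs_le (hM ω))
  rw [this, univ_inter]

lemma gg_eq_zero (hc : Cap c) {M : ℝ} (hM : ∀ ω, |Z ω| ≤ M) {t : ℝ} (ht : M ≤ t) :
    gg c Z B t = 0 := by
  unfold gg
  have : {ω | t < Z ω} = ∅ := eq_empty_of_forall_notMem fun ω h =>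
    absurd h (not_lt.2 (le_trans (le_of_abs_le (hM ω)) ht))
  rw [this, empty_inter, hc.empty]

/-- plain survival function -/
noncomputable def sf (c : Set Ω → ℝ) (Z : Ω → ℝ) (t : ℝ) : ℝ := c {ω | t < Z ω}

lemma sf_eq_gg (c : Set Ω → ℝ) (Z : Ω → ℝ) : sf c Z = gg c Z univ := by
  funext t; unfold sf gg; rw [inter_univ]

lemma sf_antitone (hc : Cap c) (hZ : Measurable Z) : Antitone (sf c Z) := by
  rw [sf_eq_gg]; exact gg_antitone hc hZ MeasurableSet.univ

lemma sf_nonneg (hc : Cap c) (hZ : Measurable Z) (t : ℝ) : 0 ≤ sf c Z t := by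
  rw [sf_eq_gg]; exact gg_nonneg hc hZ MeasurableSet.univ t

lemma sf_le_one (hc : Cap c) (hZ : Measurable Z) (t : ℝ) : sf c Z t ≤ 1 := by
  rw [sf_eq_gg]; exact gg_le_one hc hZ MeasurableSet.univ t

lemma sf_intervalIntegrable (hc : Cap c) (hZ : Measurable Z) (a b : ℝ) :
    IntervalIntegrable (sf c Z) volume a b := by
  rw [sf_eq_gg]; exact gg_intervalIntegrable hc hZ MeasurableSet.univ a b

lemma sf_eq_one (hc : Cap c) {M : ℝ} (hM : ∀ ω, |Z ω| ≤ M) {t : ℝ} (ht : t < -M) :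
    sf c Z t = 1 := by
  rw [sf_eq_gg, gg_eq_cB hM ht, hc.cuniv]

lemma sf_eq_zero (hc : Cap c) {M : ℝ} (hM : ∀ ω, |Z ω| ≤ M) {t : ℝ} (ht : M ≤ t) :
    sf c Z t = 0 := by
  rw [sf_eq_gg, gg_eq_zero hc hM ht]


lemma choquet_eq (hc : Cap c) (hZ : Measurable Z) {M L : ℝ}
    (hM : ∀ ω, |Z ω| ≤ M) (hL0 : 0 ≤ L) (hML : M < L) :
    choquet c Z = (∫ t in (-L)..L, sf c Z t) - L := by
  have hML' : M ≤ L := le_of_lt hML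
  have hL : -L ≤ 0 := by linarith
  -- part 1 : ∫ x in Iio 0, (sf x - 1)
  have int_Ioc1 : IntegrableOn (fun t => sf c Z t - 1) (Ioc (-L) 0) volume := by
    have := (sf_intervalIntegrable hc hZ (-L) 0).sub (intervalIntegrable_const (c := (1:ℝ)))
    exact (intervalIntegrable_iff_integrableOn_Ioc_of_le hL).1 this
  have zero_Iic : ∀ t ∈ Iic (-L), sf c Z t - 1 = 0 := by
    intro t ht
    rw [sf_eq_one hc hM (lt_of_le_of_lt ht (by linarith))]; ring
  have int_Iic : IntegrableOn (fun t => sf c Z t - 1) (Iic (-L)) volume := by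
    apply (integrableOn_congr_fun_ae (f := fun _ : ℝ => (0:ℝ)) ?_).1 (integrableOn_zero)
    exact (ae_restrict_iff' measurableSet_Iic).2 (Filter.Eventually.of_forall
      (fun t ht => (zero_Iic t ht).symm))
  have part1 : (∫ x in Iio (0:ℝ), (sf c Z x - 1)) = (∫ t in (-L)..0, sf c Z t) - L := by
    rw [setIntegral_congr_set Iio_ae_eq_Iic, ← Iic_union_Ioc_eq_Iic hL,
      setIntegral_union (Iic_disjoint_Ioc le_rfl) measurableSet_Ioc int_Iic int_Ioc1,
      setIntegral_congr_fun measurableSet_Iic zero_Iic, integral_zero,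
      ← intervalIntegral.integral_of_le hL, zero_add,
      intervalIntegral.integral_sub (sf_intervalIntegrable hc hZ _ _) intervalIntegrable_const,
      intervalIntegral.integral_const]
    simp
  -- part 2 : ∫ x in Ioi 0, sf x
  have zero_Ioi : ∀ t ∈ Ioi L, sf c Z t = 0 := fun t ht =>
    sf_eq_zero hc hM (le_of_lt (lt_of_le_of_lt hML' ht))
  have int_Ioi : IntegrableOn (sf c Z) (Ioi L) volume := by
    apply (integrableOn_congr_fun_ae (f := fun _ : ℝ => (0:ℝ)) ?_).1 (integrableOn_zero)
    exact (ae_restrict_iff' measurableSet_Ioi).2 (Filter.Eventually.of_forall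
      (fun t ht => (zero_Ioi t ht).symm))
  have int_Ioc2 : IntegrableOn (sf c Z) (Ioc 0 L) volume :=
    (intervalIntegrable_iff_integrableOn_Ioc_of_le hL0).1 (sf_intervalIntegrable hc hZ 0 L)
  have part2 : (∫ x in Ioi (0:ℝ), sf c Z x) = ∫ t in (0:ℝ)..L, sf c Z t := by
    rw [← Ioc_union_Ioi_eq_Ioi hL0,
      setIntegral_union (Ioc_disjoint_Ioi le_rfl) measurableSet_Ioi int_Ioc2 int_Ioi,
      setIntegral_congr_fun measurableSet_Ioi zero_Ioi, integral_zero,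
      ← intervalIntegral.integral_of_le hL0, add_zero]
  have : choquet c Z = (∫ x in Iio (0:ℝ), (sf c Z x - 1)) + ∫ x in Ioi (0:ℝ), sf c Z x := rfl
  rw [this, part1, part2, ← intervalIntegral.integral_add_adjacent_intervals
    (sf_intervalIntegrable hc hZ (-L) 0) (sf_intervalIntegrable hc hZ 0 L)]
  ring


lemma Cap.nonempty (hc : Cap c) : Nonempty Ω := by
  by_contra h
  have huniv : (univ : Set Ω) = ∅ := by
    ext ω; exact (h ⟨ω⟩).elim
  have h1 := hc.cuniv
  rw [huniv, hc.empty] at h1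
  linarith

lemma stepA (hc : Cap c) (hZ : Measurable Z) {M : ℝ} (hM : ∀ ω, |Z ω| ≤ M)
    {a : ℝ} (ha : 0 ≤ a) {B : Set Ω} (hB : MeasurableSet B) :
    choquet c (fun ω => Z ω + B.indicator (fun _ => a) ω) ≤ choquet c Z + a * c B := by
  obtain ⟨ω0⟩ := hc.nonempty
  have hM0 : 0 ≤ M := le_trans (abs_nonneg _) (hM ω0)
  set L : ℝ := M + a + 1 with hLdef
  set Z' : Ω → ℝ := fun ω => Z ω + B.indicator (fun _ => a) ω with hZ'def
  have hZ' : Measurable Z' := hZ.add (measurable_const.indicator hB)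
  have hind0 : ∀ ω, B.indicator (fun _ : Ω => a) ω = a ∨ B.indicator (fun _ : Ω => a) ω = 0 := by
    intro ω
    by_cases h : ω ∈ B
    · left; exact Set.indicator_of_mem h _
    · right; exact Set.indicator_of_notMem h _
  have hM' : ∀ ω, |Z' ω| ≤ M + a := by
    intro ω
    rw [abs_le]
    rcases abs_le.1 (hM ω) with ⟨h1, h2⟩
    have : Z' ω = Z ω + B.indicator (fun _ => a) ω := rfl
    rcases hind0 ω with h | h <;> rw [this, h] <;> constructor <;> linarith
  have hL0 : (0:ℝ) ≤ L := by simp only [hLdef]; linarith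
  have repZ' := choquet_eq (Z := Z') hc hZ' hM' hL0 (by simp only [hLdef]; linarith)
  have repZ := choquet_eq (Z := Z) hc hZ hM hL0 (by simp only [hLdef]; linarith)
  -- pointwise submodularity bound
  have hpt : ∀ t, sf c Z' t ≤ sf c Z t + (gg c Z B (t - a) - gg c Z B t) := by
    intro t
    set A : Set Ω := {ω | t - a < Z ω} ∩ B with hA
    set C : Set Ω := {ω | t < Z ω} with hC
    have hAm : MeasurableSet A := (meas_gt Z hZ _).inter hB
    have hCm : MeasurableSet C := meas_gt Z hZ _
    have hset : {ω | t < Z' ω} = A ∪ C := by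
      ext ω
      have hZ'ω : Z' ω = Z ω + B.indicator (fun _ => a) ω := rfl
      simp only [hA, hC, mem_setOf_eq, mem_union, mem_inter_iff, hZ'ω]
      by_cases h : ω ∈ B
      · rw [Set.indicator_of_mem h]
        simp only [h, and_true]
        constructor
        · intro hlt; by_cases h2 : t < Z ω
          · right; exact h2
          · left; linarith
        · rintro (h1 | h2) <;> linarith
      · rw [Set.indicator_of_notMem h]
        simp only [h, and_false, false_or, add_zero]
    have hinter : A ∩ C = {ω | t < Z ω} ∩ B := by
      ext ω
      simp only [hA, hC, mem_inter_iff, mem_setOf_eq]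
      constructor
      · rintro ⟨⟨h1, hb⟩, h2⟩; exact ⟨h2, hb⟩
      · rintro ⟨h2, hb⟩; exact ⟨⟨by linarith, hb⟩, h2⟩
    have hsub := hc.submod A C hAm hCm
    rw [hinter] at hsub
    have he : sf c Z' t = c (A ∪ C) := by rw [sf, hset]
    have h1 : gg c Z B (t - a) = c A := rfl
    have h2 : gg c Z B t = c ({ω | t < Z ω} ∩ B) := rfl
    have h3 : sf c Z t = c C := rfl
    rw [he, h1, h2, h3]
    linarith
  -- integrability
  have iZ' := sf_intervalIntegrable (Z := Z') hc hZ' (-L) L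
  have iZ := sf_intervalIntegrable (Z := Z) hc hZ (-L) L
  have iganti : Antitone (gg c Z B) := gg_antitone hc hZ hB
  have hmono : Monotone (fun t : ℝ => t - a) := fun x y h => by simpa using sub_le_sub_right h a
  have igshift : Antitone (fun t => gg c Z B (t - a)) := iganti.comp_monotone hmono
  have ig1 : IntervalIntegrable (fun t => gg c Z B (t - a)) volume (-L) L :=
    igshift.intervalIntegrable
  have ig2 : IntervalIntegrable (gg c Z B) volume (-L) L := iganti.intervalIntegrable
  -- main integral inequality
  have key : (∫ t in (-L)..L, sf c Z' t) ≤
      (∫ t in (-L)..L, sf c Z t) + ((∫ t in (-L)..L, gg c Z B (t - a)) -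
        ∫ t in (-L)..L, gg c Z B t) := by
    have := intervalIntegral.integral_mono_on (μ := volume) (by linarith : -L ≤ L) iZ'
      (iZ.add (ig1.sub ig2)) (fun t _ => hpt t)
    rw [intervalIntegral.integral_add iZ (ig1.sub ig2), intervalIntegral.integral_sub ig1 ig2]
      at this
    exact this
  -- compute the gg difference
  have shift : (∫ t in (-L)..L, gg c Z B (t - a)) = ∫ t in (-L - a)..(L - a), gg c Z B t :=
    intervalIntegral.integral_comp_sub_right (gg c Z B) a
  have left_piece : (∫ t in (-L - a)..(-L), gg c Z B t) = a * c B := by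
    rw [intervalIntegral.integral_congr (g := fun _ => c B), intervalIntegral.integral_const]
    · rw [smul_eq_mul]; ring
    · intro t ht
      rw [uIcc_of_le (by linarith)] at ht
      rcases ht with ⟨_, h2⟩
      exact gg_eq_cB hM (by simp only [hLdef] at h2 ⊢; linarith)
  have right_piece : (∫ t in (L - a)..L, gg c Z B t) = 0 := by
    rw [intervalIntegral.integral_congr (g := fun _ => (0:ℝ)), intervalIntegral.integral_const,
      smul_zero]
    intro t ht
    rw [uIcc_of_le (by linarith)] at ht
    rcases ht with ⟨h1, _⟩
    exact gg_eq_zero hc hM (by simp only [hLdef] at h1 ⊢; linarith)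
  have split1 : (∫ t in (-L - a)..(L - a), gg c Z B t) =
      (∫ t in (-L - a)..(-L), gg c Z B t) + ∫ t in (-L)..(L - a), gg c Z B t :=
    (intervalIntegral.integral_add_adjacent_intervals iganti.intervalIntegrable
      iganti.intervalIntegrable).symm
  have split2 : (∫ t in (-L)..L, gg c Z B t) =
      (∫ t in (-L)..(L - a), gg c Z B t) + ∫ t in (L - a)..L, gg c Z B t :=
    (intervalIntegral.integral_add_adjacent_intervals iganti.intervalIntegrable
      iganti.intervalIntegrable).symm
  rw [repZ', repZ]
  rw [shift, split1, split2, left_piece, right_piece] at key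
  linarith

lemma choquet_shift (hc : Cap c) (hZ : Measurable Z) {M : ℝ} (hM : ∀ ω, |Z ω| ≤ M) (r : ℝ) :
    choquet c (fun ω => Z ω + r) = choquet c Z + r := by
  obtain ⟨ω0⟩ := hc.nonempty
  have hM0 : 0 ≤ M := le_trans (abs_nonneg _) (hM ω0)
  have habs1 : -|r| ≤ r := neg_abs_le r
  have habs2 : r ≤ |r| := le_abs_self r
  set L : ℝ := M + |r| + 1 with hLdef
  set L' : ℝ := L + |r| with hL'def
  set Zr : Ω → ℝ := fun ω => Z ω + r with hZrdef
  have hZr : Measurable Zr := hZ.add measurable_const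
  have hMr : ∀ ω, |Zr ω| ≤ M + |r| := fun ω => (abs_add_le _ _).trans (add_le_add (hM ω) le_rfl)
  have repZr := choquet_eq (Z := Zr) (L := L) hc hZr hMr (by simp only [hLdef]; linarith)
    (by simp only [hLdef]; linarith)
  have repZ := choquet_eq (Z := Z) (L := L') hc hZ hM
    (by simp only [hL'def, hLdef]; linarith) (by simp only [hL'def, hLdef]; linarith)
  have hsf : ∀ t, sf c Zr t = sf c Z (t - r) := by
    intro t
    unfold sf
    congr 1
    ext ω
    simp only [hZrdef, mem_setOf_eq]
    constructor <;> intro h <;> linarith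
  have e1 : (∫ t in (-L)..L, sf c Zr t) = ∫ t in (-L)..L, sf c Z (t - r) := by
    apply intervalIntegral.integral_congr
    intro t _
    exact hsf t
  have e2 : (∫ t in (-L)..L, sf c Z (t - r)) = ∫ t in (-L - r)..(L - r), sf c Z t :=
    intervalIntegral.integral_comp_sub_right (sf c Z) r
  have ii : ∀ u v : ℝ, IntervalIntegrable (sf c Z) volume u v := sf_intervalIntegrable hc hZ
  have split : (∫ t in (-L')..L', sf c Z t) =
      (∫ t in (-L')..(-L - r), sf c Z t) + ((∫ t in (-L - r)..(L - r), sf c Z t)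
        + ∫ t in (L - r)..L', sf c Z t) := by
    rw [intervalIntegral.integral_add_adjacent_intervals (ii _ _) (ii _ _),
      intervalIntegral.integral_add_adjacent_intervals (ii _ _) (ii _ _)]
  have p1 : (∫ t in (-L')..(-L - r), sf c Z t) = |r| - r := by
    rw [intervalIntegral.integral_congr (g := fun _ => (1:ℝ)), intervalIntegral.integral_const]
    · rw [smul_eq_mul, mul_one, hL'def]; ring
    · intro t ht
      rw [uIcc_of_le (by simp only [hL'def]; linarith)] at ht
      rcases ht with ⟨_, h2⟩
      exact sf_eq_one hc hM (lt_of_le_of_lt h2 (by simp only [hLdef]; linarith))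
  have p2 : (∫ t in (L - r)..L', sf c Z t) = 0 := by
    rw [intervalIntegral.integral_congr (g := fun _ => (0:ℝ)), intervalIntegral.integral_const,
      smul_zero]
    intro t ht
    rw [uIcc_of_le (by simp only [hL'def]; linarith)] at ht
    rcases ht with ⟨h1, _⟩
    exact sf_eq_zero hc hM (le_trans (by simp only [hLdef]; linarith) h1)
  rw [repZr, repZ, e1, e2]
  rw [p1, p2] at split
  simp only [hL'def] at split ⊢
  linarith

lemma choquet_mono (hc : Cap c) {W : Ω → ℝ} (hZ : Measurable Z) (hW : Measurable W)
    {MZ MW : ℝ} (hMZ : ∀ ω, |Z ω| ≤ MZ) (hMW : ∀ ω, |W ω| ≤ MW)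
    (hle : ∀ ω, Z ω ≤ W ω) : choquet c Z ≤ choquet c W := by
  obtain ⟨ω0⟩ := hc.nonempty
  have hM0 : 0 ≤ MZ := le_trans (abs_nonneg _) (hMZ ω0)
  have hM0' : 0 ≤ MW := le_trans (abs_nonneg _) (hMW ω0)
  set L : ℝ := max MZ MW + 1 with hLdef
  have h1 : MZ ≤ max MZ MW := le_max_left _ _
  have h2 : MW ≤ max MZ MW := le_max_right _ _
  have repZ := choquet_eq (Z := Z) (L := L) hc hZ hMZ (by simp only [hLdef]; linarith)
    (by simp only [hLdef]; linarith)
  have repW := choquet_eq (Z := W) (L := L) hc hW hMW (by simp only [hLdef]; linarith)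
    (by simp only [hLdef]; linarith)
  rw [repZ, repW]
  have hint : (∫ t in (-L)..L, sf c Z t) ≤ ∫ t in (-L)..L, sf c W t := by
    apply intervalIntegral.integral_mono_on (by linarith : -L ≤ L)
      (sf_intervalIntegrable hc hZ _ _) (sf_intervalIntegrable hc hW _ _)
    intro t _
    exact hc.mono (meas_gt Z hZ t) (meas_gt W hW t)
      (fun ω h => lt_of_lt_of_le h (hle ω))
  linarith

lemma stepA_iter (hc : Cap c) (hZ : Measurable Z) {M : ℝ} (hM : ∀ ω, |Z ω| ≤ M)
    {ε : ℝ} (hε : 0 ≤ ε) (B : ℕ → Set Ω) (hB : ∀ j, MeasurableSet (B j)) (n : ℕ) :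
    choquet c (fun ω => Z ω + ∑ j ∈ Finset.range n, (B j).indicator (fun _ => ε) ω)
      ≤ choquet c Z + ε * ∑ j ∈ Finset.range n, c (B j) := by
  induction n with
  | zero => simp
  | succ n ih =>
    have hind_nonneg : ∀ j (ω : Ω), 0 ≤ (B j).indicator (fun _ => ε) ω := fun j ω =>
      Set.indicator_nonneg (fun _ _ => hε) ω
    have hind_le : ∀ j (ω : Ω), (B j).indicator (fun _ => ε) ω ≤ ε := by
      intro j ω
      by_cases h : ω ∈ B j
      · rw [Set.indicator_of_mem h]
      · rw [Set.indicator_of_notMem h]; exact hε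
    set Zn : Ω → ℝ := fun ω => Z ω + ∑ j ∈ Finset.range n, (B j).indicator (fun _ => ε) ω
      with hZndef
    have hZn : Measurable Zn :=
      hZ.add (Finset.measurable_sum _ (fun j _ => measurable_const.indicator (hB j)))
    have hMn : ∀ ω, |Zn ω| ≤ M + n * ε := by
      intro ω
      rw [abs_le]
      rcases abs_le.1 (hM ω) with ⟨ha1, ha2⟩
      have hs1 : (0:ℝ) ≤ ∑ j ∈ Finset.range n, (B j).indicator (fun _ => ε) ω :=
        Finset.sum_nonneg (fun j _ => hind_nonneg j ω)
      have hs2 : (∑ j ∈ Finset.range n, (B j).indicator (fun _ => ε) ω) ≤ n * ε := by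
        calc (∑ j ∈ Finset.range n, (B j).indicator (fun _ => ε) ω)
            ≤ ∑ j ∈ Finset.range n, ε := Finset.sum_le_sum (fun j _ => hind_le j ω)
          _ = n * ε := by rw [Finset.sum_const, Finset.card_range, nsmul_eq_mul]
      have : Zn ω = Z ω + ∑ j ∈ Finset.range n, (B j).indicator (fun _ => ε) ω := rfl
      rw [this]
      constructor <;> linarith
    have heq : (fun ω => Z ω + ∑ j ∈ Finset.range (n+1), (B j).indicator (fun _ => ε) ω)
        = fun ω => Zn ω + (B n).indicator (fun _ => ε) ω := by
      funext ω
      simp only [hZndef, Finset.sum_range_succ]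
      ring
    rw [heq, Finset.sum_range_succ]
    calc choquet c (fun ω => Zn ω + (B n).indicator (fun _ => ε) ω)
        ≤ choquet c Zn + ε * c (B n) := stepA hc hZn hMn hε (hB n)
      _ ≤ choquet c Z + ε * ∑ j ∈ Finset.range n, c (B j) + ε * c (B n) := by linarith
      _ = choquet c Z + ε * (∑ j ∈ Finset.range n, c (B j) + c (B n)) := by ring

lemma main_eps (hc : Cap c) {X Y : Ω → ℝ} (hX : Measurable X) (hY : Measurable Y)
    {M : ℝ} (hMX : ∀ ω, |X ω| ≤ M) (hMY : ∀ ω, |Y ω| ≤ M) {ε : ℝ} (hε : 0 < ε) :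
    choquet c (fun ω => X ω + Y ω) ≤ choquet c X + choquet c Y + 2 * ε := by
  obtain ⟨ω0⟩ := hc.nonempty
  have hM0 : 0 ≤ M := le_trans (abs_nonneg _) (hMX ω0)
  set K : ℕ := ⌈(M + 1) / ε⌉₊ with hKdef
  have hK : M + 1 ≤ (K : ℝ) * ε := by
    have h := Nat.le_ceil ((M + 1) / ε)
    rw [div_le_iff₀ hε] at h
    exact h
  set B : ℕ → Set Ω := fun j => {ω | ((j : ℝ) + 1 - K) * ε ≤ Y ω} with hBdef
  have hBmeas : ∀ j, MeasurableSet (B j) := fun j => measurableSet_le measurable_const hY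
  have hind_nonneg : ∀ j (ω : Ω), 0 ≤ (B j).indicator (fun _ => ε) ω := fun j ω =>
    Set.indicator_nonneg (fun _ _ => hε.le) ω
  have hind_le : ∀ j (ω : Ω), (B j).indicator (fun _ => ε) ω ≤ ε := by
    intro j ω
    by_cases h : ω ∈ B j
    · rw [Set.indicator_of_mem h]
    · rw [Set.indicator_of_notMem h]; exact hε.le
  -- lower bound for the indicator sum
  have claim_ind : ∀ (n : ℕ) (ω : Ω),
      min ((n : ℝ) * ε) (Y ω + ((K : ℝ) - 1) * ε)
        ≤ ∑ j ∈ Finset.range n, (B j).indicator (fun _ => ε) ω := by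
    intro n ω
    induction n with
    | zero => simpa using min_le_left (0 : ℝ) _
    | succ n ih =>
      rw [Finset.sum_range_succ]
      push_cast
      by_cases h : ω ∈ B n
      · rw [Set.indicator_of_mem h]
        have h1 : min (((n : ℝ) + 1) * ε) (Y ω + ((K : ℝ) - 1) * ε)
            ≤ min ((n : ℝ) * ε + ε) (Y ω + ((K : ℝ) - 1) * ε + ε) :=
          min_le_min (by linarith) (by linarith)
        rw [min_add_add_right] at h1
        linarith
      · rw [Set.indicator_of_notMem h, add_zero]
        have h' : Y ω < ((n : ℝ) + 1 - K) * ε := by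
          simp only [hBdef, mem_setOf_eq, not_le] at h
          exact h
        have hc1 : Y ω + ((K : ℝ) - 1) * ε ≤ (n : ℝ) * ε := by nlinarith
        calc min (((n : ℝ) + 1) * ε) (Y ω + ((K : ℝ) - 1) * ε)
            ≤ Y ω + ((K : ℝ) - 1) * ε := min_le_right _ _
          _ = min ((n : ℝ) * ε) (Y ω + ((K : ℝ) - 1) * ε) := (min_eq_right hc1).symm
          _ ≤ _ := ih
  have claim1 : ∀ ω, Y ω + ((K : ℝ) - 1) * ε
      ≤ ∑ j ∈ Finset.range (2 * K), (B j).indicator (fun _ => ε) ω := by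
    intro ω
    have h2K : Y ω + ((K : ℝ) - 1) * ε ≤ ((2 * K : ℕ) : ℝ) * ε := by
      push_cast
      nlinarith [hMY ω, abs_le.1 (hMY ω)]
    have := claim_ind (2 * K) ω
    rw [min_eq_right h2K] at this
    exact this
  -- measurability and bounds of X + W
  have hsum_meas : Measurable (fun ω => ∑ j ∈ Finset.range (2 * K),
      (B j).indicator (fun _ => ε) ω) :=
    Finset.measurable_sum _ (fun j _ => measurable_const.indicator (hBmeas j))
  have hsum_bnd : ∀ ω, 0 ≤ (∑ j ∈ Finset.range (2 * K), (B j).indicator (fun _ => ε) ω)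
      ∧ (∑ j ∈ Finset.range (2 * K), (B j).indicator (fun _ => ε) ω) ≤ (2 * K : ℝ) * ε := by
    intro ω
    constructor
    · exact Finset.sum_nonneg (fun j _ => hind_nonneg j ω)
    · calc (∑ j ∈ Finset.range (2 * K), (B j).indicator (fun _ => ε) ω)
          ≤ ∑ j ∈ Finset.range (2 * K), ε := Finset.sum_le_sum (fun j _ => hind_le j ω)
        _ = (2 * K : ℝ) * ε := by
            rw [Finset.sum_const, Finset.card_range, nsmul_eq_mul]; push_cast; ring
  have hXW : Measurable (fun ω => X ω + ∑ j ∈ Finset.range (2 * K),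
      (B j).indicator (fun _ => ε) ω) := hX.add hsum_meas
  have hXWb : ∀ ω, |X ω + ∑ j ∈ Finset.range (2 * K), (B j).indicator (fun _ => ε) ω|
      ≤ M + (2 * K : ℝ) * ε := by
    intro ω
    rw [abs_le]
    rcases abs_le.1 (hMX ω) with ⟨h1, h2⟩
    rcases hsum_bnd ω with ⟨h3, h4⟩
    have hKe : 0 ≤ (2 * K : ℝ) * ε := le_trans h3 h4
    constructor <;> linarith
  -- step 1 : monotonicity
  have h1 : choquet c (fun ω => X ω + Y ω) ≤ choquet c
      (fun ω => (X ω + ∑ j ∈ Finset.range (2 * K), (B j).indicator (fun _ => ε) ω)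
        + (1 - (K : ℝ)) * ε) := by
    apply choquet_mono hc (hX.add hY) (hXW.add measurable_const)
      (MZ := 2 * M) (MW := M + (2 * K : ℝ) * ε + (K : ℝ) * ε + ε)
    · intro ω
      calc |X ω + Y ω| ≤ |X ω| + |Y ω| := abs_add_le _ _
        _ ≤ 2 * M := by linarith [hMX ω, hMY ω]
    · intro ω
      rcases abs_le.1 (hXWb ω) with ⟨hl, hr⟩
      have hKe : (0:ℝ) ≤ (K : ℝ) * ε := by positivity
      have hKn : (0:ℝ) ≤ (K : ℝ) := Nat.cast_nonneg K
      have h5 : |(1 - (K : ℝ)) * ε| ≤ (K:ℝ) * ε + ε := by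
        rw [abs_mul, abs_of_pos hε]
        have h6 : |1 - (K:ℝ)| ≤ (K:ℝ) + 1 := by
          rw [abs_le]; constructor <;> linarith
        nlinarith
      rcases abs_le.1 h5 with ⟨h6, h7⟩
      rw [abs_le]
      simp only [Pi.add_apply]
      constructor <;> linarith
    · intro ω
      have := claim1 ω
      simp only [Pi.add_apply]
      linarith
  -- step 2 : shift
  have h2 : choquet c (fun ω => (X ω + ∑ j ∈ Finset.range (2 * K),
        (B j).indicator (fun _ => ε) ω) + (1 - (K : ℝ)) * ε)
      = choquet c (fun ω => X ω + ∑ j ∈ Finset.range (2 * K),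
        (B j).indicator (fun _ => ε) ω) + (1 - (K : ℝ)) * ε :=
    choquet_shift hc hXW hXWb _
  -- step 3 : iterated submodular step
  have h3 : choquet c (fun ω => X ω + ∑ j ∈ Finset.range (2 * K),
        (B j).indicator (fun _ => ε) ω)
      ≤ choquet c X + ε * ∑ j ∈ Finset.range (2 * K), c (B j) :=
    stepA_iter hc hX hMX hε.le B hBmeas (2 * K)
  -- step 4 : lower bound on choquet Y
  have h4 : ε * ∑ j ∈ Finset.range (2 * K), c (B j)
      ≤ choquet c Y + (K : ℝ) * ε + ε := by
    set a : ℕ → ℝ := fun i => ((i : ℝ) - K) * ε with hadef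
    have ha0 : a 0 = -((K : ℝ) * ε) := by simp only [hadef]; push_cast; ring
    have ha2K : a (2 * K) = (K : ℝ) * ε := by simp only [hadef]; push_cast; ring
    have hastep : ∀ k : ℕ, a (k + 1) - a k = ε := by
      intro k; simp only [hadef]; push_cast; ring
    have repY := choquet_eq (Z := Y) (L := (K : ℝ) * ε) hc hY hMY (by positivity)
      (by linarith)
    have total := intervalIntegral.sum_integral_adjacent_intervals (μ := volume)
      (a := a) (n := 2 * K) (f := sf c Y)
      (fun k _ => sf_intervalIntegrable hc hY _ _)
    rw [ha0, ha2K] at total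
    have piece : ∀ k : ℕ, ε * c (B (k + 1)) ≤ ∫ t in a k..a (k + 1), sf c Y t := by
      intro k
      have hle : a k ≤ a (k + 1) := by have := hastep k; linarith
      have hmono := intervalIntegral.integral_mono_on (μ := volume) hle
        (intervalIntegrable_const (c := c (B (k + 1))))
        (sf_intervalIntegrable hc hY _ _) ?_
      · rw [intervalIntegral.integral_const, smul_eq_mul, hastep k] at hmono
        exact hmono
      · intro t ht
        rcases ht with ⟨_, ht2⟩
        apply hc.mono (hBmeas (k + 1)) (meas_gt Y hY t)
        intro ω hω
        simp only [hBdef, mem_setOf_eq] at hω ⊢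
        have ha1 : a (k + 1) = ((k : ℝ) + 1 - K) * ε := by
          simp only [hadef]; push_cast; ring
        have : (((k + 1 : ℕ) : ℝ) + 1 - K) * ε = ((k : ℝ) + 1 - K) * ε + ε := by
          push_cast; ring
        rw [this] at hω
        rw [ha1] at ht2
        linarith
    have hsum_le : ∑ k ∈ Finset.range (2 * K), ε * c (B (k + 1))
        ≤ ∫ t in (-((K : ℝ) * ε))..((K : ℝ) * ε), sf c Y t := by
      rw [← total]
      exact Finset.sum_le_sum (fun k _ => piece k)
    have hre : ∑ k ∈ Finset.range (2 * K), ε * c (B (k + 1))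
        = (∑ j ∈ Finset.range (2 * K), ε * c (B j)) + ε * c (B (2 * K)) - ε * c (B 0) := by
      have hs1 := Finset.sum_range_succ' (fun j => ε * c (B j)) (2 * K)
      have hs2 := Finset.sum_range_succ (fun j => ε * c (B j)) (2 * K)
      rw [hs2] at hs1
      linarith
    have hB0 : c (B 0) ≤ 1 := (hc.range _ (hBmeas 0)).2
    have hB2K : 0 ≤ c (B (2 * K)) := (hc.range _ (hBmeas (2 * K))).1
    have : ε * ∑ j ∈ Finset.range (2 * K), c (B j)
        = ∑ j ∈ Finset.range (2 * K), ε * c (B j) := Finset.mul_sum _ _ _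
    rw [this]
    have hεB2K : 0 ≤ ε * c (B (2 * K)) := by positivity
    have hεB0 : ε * c (B 0) ≤ ε := by nlinarith
    linarith [hsum_le, hre, repY]
  linarith [h1, h2, h3, h4]

end ChoquetAux

/-- If the monotone normalized set function `c` is submodular, then the Choquet integral
is subadditive on bounded Borel-measurable functions. -/
theorem choquet_subadditive_of_submodular {Ω : Type*} [MeasurableSpace Ω] (c : Set Ω → ℝ)
    (hc_mono : ∀ ⦃A B : Set Ω⦄, MeasurableSet A → MeasurableSet B → A ⊆ B → c A ≤ c B)
    (hc_range : ∀ A : Set Ω, MeasurableSet A → c A ∈ Set.Icc (0 : ℝ) 1)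
    (hc_empty : c ∅ = 0) (hc_univ : c Set.univ = 1)
    (hc_submod : ∀ A B : Set Ω, MeasurableSet A → MeasurableSet B →
        c (A ∪ B) + c (A ∩ B) ≤ c A + c B)
    (X Y : Ω → ℝ) (hX : Measurable X) (hY : Measurable Y)
    (hXb : ∃ M, ∀ ω, |X ω| ≤ M) (hYb : ∃ M, ∀ ω, |Y ω| ≤ M) :
    choquet c (fun ω => X ω + Y ω) ≤ choquet c X + choquet c Y := by
  have hc : ChoquetAux.Cap c := ⟨hc_mono, hc_range, hc_empty, hc_univ, hc_submod⟩
  obtain ⟨MX, hMX⟩ := hXb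
  obtain ⟨MY, hMY⟩ := hYb
  have hMX' : ∀ ω, |X ω| ≤ max MX MY := fun ω => le_trans (hMX ω) (le_max_left _ _)
  have hMY' : ∀ ω, |Y ω| ≤ max MX MY := fun ω => le_trans (hMY ω) (le_max_right _ _)
  apply le_of_forall_pos_le_add
  intro ε hε
  have := ChoquetAux.main_eps hc hX hY hMX' hMY' (half_pos hε)
  linarith
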